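/- arXiv:1407.1093 — 2 statements merged into one kernel-verified Lean document; each statement's English description precedes it below -/
import Mathlib

section
/- Let O be a complete discrete valuation ring with maximal ideal m and residue field k, L its fraction field, and V a finite-dimensional L-vector space with a continuous action of a group G. Let T, T' ⊆ V be two G-stable O-lattices. If the residual representation T/mT is irreducible as a k[G]-module, then T/mT and T'/mT' are isomorphic as k[G]-modules. -/
open IsLocalRing

/-- The endomorphism of the residual representation `T ⧸ I•T` induced by an `O`-linear
endomorphism of `T`. -/
def residualMap {O T : Type*} [CommRing O] [AddCommGroup T] [Module O T]
    (I : Ideal O) (f : T →ₗ[O] T) :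
    (T ⧸ (I • ⊤ : Submodule O T)) →ₗ[O] (T ⧸ (I • ⊤ : Submodule O T)) :=
  Submodule.mapQ _ _ f (by
    rw [← Submodule.map_le_iff_le_comap, Submodule.map_smul'']
    exact Submodule.smul_mono le_rfl le_top)

lemma residualMap_mk {O M : Type*} [CommRing O] [AddCommGroup M] [Module O M]
    (I : Ideal O) (f : M →ₗ[O] M) (x : M) :
    residualMap I f (Submodule.Quotient.mk x) = Submodule.Quotient.mk (f x) := rfl

lemma exists_ne_zero_smul_mem
    {O : Type*} [CommRing O] [IsDomain O]
    {L : Type*} [Field L] [Algebra O L] [IsFractionRing O L]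
    {V : Type*} [AddCommGroup V] [Module L V] [Module O V] [IsScalarTower O L V]
    (A : Submodule O V) (hA : Submodule.span L (A : Set V) = ⊤) (v : V) :
    ∃ c : O, c ≠ 0 ∧ c • v ∈ A := by
  have hv : v ∈ Submodule.span L (A : Set V) := hA ▸ Submodule.mem_top
  obtain ⟨n, f, g, hfg⟩ := Submodule.mem_span_set'.mp hv
  obtain ⟨b, hb⟩ := IsLocalization.exist_integer_multiples (nonZeroDivisors O) Finset.univ f
  refine ⟨(b : O), nonZeroDivisors.ne_zero b.2, ?_⟩
  have h1 : (b : O) • v = ∑ i, (((b : O) • f i) • (g i : V)) := by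
    rw [← hfg, Finset.smul_sum]
    exact Finset.sum_congr rfl fun i _ => (smul_assoc _ _ _).symm
  rw [h1]
  refine Submodule.sum_mem _ fun i _ => ?_
  obtain ⟨a, ha⟩ := hb i (Finset.mem_univ i)
  rw [← ha, algebraMap_smul]
  exact A.smul_mem _ (g i).2

lemma exists_ne_zero_smul_le
    {O : Type*} [CommRing O] [IsDomain O]
    {L : Type*} [Field L] [Algebra O L] [IsFractionRing O L]
    {V : Type*} [AddCommGroup V] [Module L V] [Module O V] [IsScalarTower O L V]
    (A B : Submodule O V) (hA : Submodule.span L (A : Set V) = ⊤) (hB : B.FG) :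
    ∃ c : O, c ≠ 0 ∧ ∀ x ∈ B, c • x ∈ A := by
  classical
  obtain ⟨s, rfl⟩ := hB
  choose c hc0 hc using fun v : V => exists_ne_zero_smul_mem A hA v
  refine ⟨∏ v ∈ s, c v, Finset.prod_ne_zero_iff.mpr fun v _ => hc0 v, ?_⟩
  intro x hx
  induction hx using Submodule.span_induction with
  | mem y hy =>
      obtain ⟨d, hd⟩ := Finset.dvd_prod_of_mem c hy
      rw [hd, mul_comm, mul_smul]
      exact A.smul_mem d (hc y)
  | zero => rw [smul_zero]; exact A.zero_mem
  | add y z _ _ hy hz => rw [smul_add]; exact A.add_mem hy hz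
  | smul o y _ hy => rw [smul_comm]; exact A.smul_mem o hy

/-- Let `O` be a complete discrete valuation ring with maximal ideal `m`
and residue field `k`, `L` its fraction field, and `V` a finite-dimensional `L`-vector
space with an action of a group `G` (given by `ρ`). Let `T, T' ⊆ V` be two `G`-stable
`O`-lattices (finitely generated `O`-submodules spanning `V` over `L` and preserved by
`G`; the `G`-actions on `T, T'` are recorded by `σ, σ'`). If the residual representation
`T/mT` is irreducible as a `k[G]`-module (no nontrivial proper `G`-stable submodules),
then `T/mT` and `T'/mT'` are isomorphic as `k[G]`-modules (an `O`-linear — equivalently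
`k`-linear, as `m` acts by zero — equivalence commuting with the `G`-actions). -/
theorem statement0
    {O : Type*} [CommRing O] [IsDomain O] [IsDiscreteValuationRing O]
    [IsAdicComplete (maximalIdeal O) O]
    {L : Type*} [Field L] [Algebra O L] [IsFractionRing O L]
    {V : Type*} [AddCommGroup V] [Module L V] [Module O V] [IsScalarTower O L V]
    [FiniteDimensional L V]
    {G : Type*} [Group G] (ρ : G →* (V →ₗ[L] V))
    (T T' : Submodule O V) (hTfg : T.FG) (hT'fg : T'.FG)
    (hTspan : Submodule.span L (T : Set V) = ⊤)
    (hT'span : Submodule.span L (T' : Set V) = ⊤)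
    (σ : G → (T →ₗ[O] T)) (σ' : G → (T' →ₗ[O] T'))
    (hσ : ∀ g (x : T), ((σ g x : V)) = ρ g (x : V))
    (hσ' : ∀ g (x : T'), ((σ' g x : V)) = ρ g (x : V))
    (hirr : ∀ W : Submodule O (T ⧸ (maximalIdeal O • ⊤ : Submodule O T)),
      (∀ g, W.map (residualMap (maximalIdeal O) (σ g)) ≤ W) → W = ⊥ ∨ W = ⊤) :
    ∃ e : (T ⧸ (maximalIdeal O • ⊤ : Submodule O T)) ≃ₗ[O]
        (T' ⧸ (maximalIdeal O • ⊤ : Submodule O T')),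
      ∀ g x, e (residualMap (maximalIdeal O) (σ g) x) =
        residualMap (maximalIdeal O) (σ' g) (e x) := by
  classical
  by_cases hV : Subsingleton V
  · haveI : Subsingleton T := ⟨fun a b => Subtype.ext (Subsingleton.elim _ _)⟩
    haveI : Subsingleton T' := ⟨fun a b => Subtype.ext (Subsingleton.elim _ _)⟩
    haveI : Subsingleton (T ⧸ (maximalIdeal O • ⊤ : Submodule O T)) :=
      (Submodule.Quotient.mk_surjective _).subsingleton
    haveI : Subsingleton (T' ⧸ (maximalIdeal O • ⊤ : Submodule O T')) :=
      (Submodule.Quotient.mk_surjective _).subsingleton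
    exact ⟨LinearEquiv.ofSubsingleton _ _, fun g x => Subsingleton.elim _ _⟩
  haveI : Nontrivial V := not_subsingleton_iff_nontrivial.mp hV
  -- basic setup
  obtain ⟨π, hπ⟩ := IsDiscreteValuationRing.exists_irreducible O
  have hπ0 : π ≠ 0 := hπ.ne_zero
  have hπm : π ∈ maximalIdeal O := by
    rw [IsLocalRing.mem_maximalIdeal, mem_nonunits_iff]; exact hπ.not_isUnit
  have hmspan : maximalIdeal O = Ideal.span {π} :=
    (IsDiscreteValuationRing.irreducible_iff_uniformizer π).mp hπ
  have hinj : Function.Injective (algebraMap O L) := IsFractionRing.injective O L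
  have haL : ∀ {z : O}, z ≠ 0 → algebraMap O L z ≠ 0 :=
    fun hz => (map_ne_zero_iff _ hinj).mpr hz
  -- choose c with c • T' ≤ T
  obtain ⟨c, hc0, hc⟩ := exists_ne_zero_smul_le T T' hTspan hT'fg
  -- a nonzero element of T'
  have hT'ne : T' ≠ ⊥ := by
    intro h
    rw [h] at hT'span
    simp only [Submodule.bot_coe, Submodule.span_zero_singleton] at hT'span
    exact bot_ne_top hT'span
  obtain ⟨t0, ht0T, ht00⟩ := T'.ne_bot_iff.mp hT'ne
  -- the set of exponents
  set S : Set ℕ := {k : ℕ | ∀ x ∈ T', ∃ t ∈ T, c • x = π ^ k • t} with hSdef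
  have h0S : 0 ∈ S := fun x hx => ⟨c • x, hc x hx, by rw [pow_zero, one_smul]⟩
  have hSdown : ∀ {j k : ℕ}, j ≤ k → k ∈ S → j ∈ S := by
    intro j k hjk hk x hx
    obtain ⟨t, ht, hct⟩ := hk x hx
    refine ⟨π ^ (k - j) • t, T.smul_mem _ ht, ?_⟩
    rw [hct, smul_smul, ← pow_add, Nat.add_sub_cancel' hjk]
  have hcancelz : ∀ {z : O}, z ≠ 0 → ∀ {x y : V}, z • x = z • y → x = y := by
    intro z hz x y h
    have h' : (algebraMap O L z) • x = (algebraMap O L z) • y := by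
      rwa [algebraMap_smul, algebraMap_smul]
    exact smul_right_injective V (haL hz) h'
  have hbdd : ∃ K, K ∉ S := by
    by_contra h
    push_neg at h
    -- the infinitely divisible part of `T`
    set N : Submodule O V := ⨅ i : ℕ, T.map (LinearMap.lsmul O V (π ^ i)) with hNdef
    have hNmem : ∀ {v : V}, v ∈ N ↔ ∀ i : ℕ, ∃ t ∈ T, π ^ i • t = v := by
      intro v
      rw [hNdef, Submodule.mem_iInf]
      exact forall_congr' fun i => Submodule.mem_map
    have hNT : N ≤ T := by
      intro v hv
      obtain ⟨t, ht, hπt⟩ := hNmem.mp hv 0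
      rw [pow_zero, one_smul] at hπt
      exact hπt ▸ ht
    have hNsmul : N ≤ (maximalIdeal O) • N := by
      intro v hv
      obtain ⟨y, hy, hπy⟩ := hNmem.mp hv 1
      rw [pow_one] at hπy
      have hyN : y ∈ N := by
        rw [hNmem]
        intro i
        obtain ⟨t, ht, hπt⟩ := hNmem.mp hv (i + 1)
        refine ⟨t, ht, hcancelz hπ0 ?_⟩
        rw [smul_smul, ← pow_succ', hπt, hπy]
      rw [← hπy]
      exact Submodule.smul_mem_smul hπm hyN
    have hNfg : N.FG := by
      haveI : IsNoetherian O T := isNoetherian_of_fg_of_noetherian T hTfg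
      have h1 : (N.comap T.subtype).FG := IsNoetherian.noetherian _
      have h2 : (N.comap T.subtype).map T.subtype = N := by
        rw [Submodule.map_comap_subtype, inf_eq_right.mpr hNT]
      exact h2 ▸ h1.map _
    have hNbot : N = ⊥ :=
      Submodule.eq_bot_of_le_smul_of_le_jacobson_bot (maximalIdeal O) N hNfg hNsmul
        (by rw [IsLocalRing.jacobson_eq_maximalIdeal ⊥ bot_ne_top])
    have hu : c • t0 ∈ N := by
      rw [hNmem]
      intro i
      obtain ⟨t, ht, hct⟩ := h i t0 ht0T
      exact ⟨t, ht, hct.symm⟩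
    rw [hNbot, Submodule.mem_bot] at hu
    have hne : c • t0 ≠ 0 := by
      have : (algebraMap O L c) • t0 ≠ 0 := smul_ne_zero (haL hc0) ht00
      rwa [algebraMap_smul] at this
    exact hne hu
  obtain ⟨K, hK⟩ := hbdd
  have hbddS : BddAbove S := ⟨K, fun j hj => not_lt.mp fun hlt => hK (hSdown hlt.le hj)⟩
  set k : ℕ := sSup S with hkdef
  have hkS : k ∈ S := Nat.sSup_mem ⟨0, h0S⟩ hbddS
  have hk1 : k + 1 ∉ S := fun h => (Nat.not_succ_le_self k) (le_csSup hbddS h)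
  -- the scaling factor
  set s : L := algebraMap O L c / (algebraMap O L π) ^ k with hsdef
  have hs0 : s ≠ 0 := div_ne_zero (haL hc0) (pow_ne_zero _ (haL hπ0))
  have hkey : ∀ x : V, (π ^ k : O) • (s • x) = c • x := by
    intro x
    rw [← algebraMap_smul L (π ^ k : O) (s • x), ← algebraMap_smul L c x, smul_smul,
      map_pow, hsdef, mul_div_cancel₀ _ (pow_ne_zero _ (haL hπ0))]
  have hcancel : ∀ {x y : V}, (π ^ k : O) • x = (π ^ k : O) • y → x = y := by
    intro x y h
    have h' : (algebraMap O L (π ^ k)) • x = (algebraMap O L (π ^ k)) • y := by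
      rwa [algebraMap_smul, algebraMap_smul]
    exact smul_right_injective V (haL (pow_ne_zero _ hπ0)) h'
  -- the rescaled lattice
  set θO : V ≃ₗ[O] V := (LinearEquiv.smulOfNeZero L V s hs0).restrictScalars O with hθdef
  have hθ : ∀ x : V, θO x = s • x := fun x => rfl
  set U : Submodule O V := T'.map (θO : V →ₗ[O] V) with hUdef
  have hUmem : ∀ {v : V}, v ∈ U ↔ ∃ x ∈ T', s • x = v := by
    intro v
    constructor
    · rintro ⟨x, hx, rfl⟩; exact ⟨x, hx, (hθ x).symm⟩
    · rintro ⟨x, hx, rfl⟩; exact ⟨x, hx, hθ x⟩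
  have hUT : U ≤ T := by
    intro v hv
    obtain ⟨x, hx, rfl⟩ := hUmem.mp hv
    obtain ⟨t, ht, hct⟩ := hkS x hx
    have : (π ^ k : O) • (s • x) = (π ^ k : O) • t := by rw [hkey, hct]
    rw [hcancel this]; exact ht
  -- membership in m • T unfolds to divisibility by π
  have hmT : ∀ {v : V}, v ∈ (maximalIdeal O) • T ↔ ∃ t ∈ T, π • t = v := by
    intro v
    rw [hmspan, Submodule.ideal_span_singleton_smul, ← SetLike.mem_coe,
      Submodule.coe_pointwise_smul, Set.mem_smul_set]
    simp only [SetLike.mem_coe]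
  have hU2 : ∃ x ∈ T', s • x ∉ (maximalIdeal O) • T := by
    by_contra h
    push_neg at h
    apply hk1
    intro x hx
    obtain ⟨t, ht, hpt⟩ := hmT.mp (h x hx)
    refine ⟨t, ht, ?_⟩
    rw [← hkey x, ← hpt, smul_smul, ← pow_succ]
  -- G-stability of T'
  have hρT' : ∀ (g : G) (x : V), x ∈ T' → ρ g x ∈ T' := by
    intro g x hx
    have := hσ' g ⟨x, hx⟩
    rw [← this]
    exact (σ' g ⟨x, hx⟩).2
  -- the image of U in the residual representation
  set W : Submodule O (T ⧸ (maximalIdeal O • ⊤ : Submodule O T)) :=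
    (U.comap T.subtype).map (Submodule.mkQ _) with hWdef
  have hWst : ∀ g, W.map (residualMap (maximalIdeal O) (σ g)) ≤ W := by
    intro g y hy
    rw [Submodule.mem_map] at hy
    obtain ⟨z, hz, rfl⟩ := hy
    rw [hWdef, Submodule.mem_map] at hz
    obtain ⟨w, hw, rfl⟩ := hz
    rw [Submodule.mkQ_apply, residualMap_mk]
    refine Submodule.mem_map_of_mem ?_
    rw [Submodule.mem_comap] at hw ⊢
    rw [Submodule.subtype_apply, hσ g w]
    obtain ⟨x, hx, hsx⟩ := hUmem.mp hw
    have hws : (w : V) = s • x := hsx.symm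
    rw [hws, map_smul]
    exact hUmem.mpr ⟨ρ g x, hρT' g x hx, rfl⟩
  have hWtop : W = ⊤ := by
    rcases hirr W hWst with hbot | htop
    · exfalso
      obtain ⟨x, hx, hxm⟩ := hU2
      have hsxT : s • x ∈ T := hUT (hUmem.mpr ⟨x, hx, rfl⟩)
      have hmem : Submodule.mkQ _ (⟨s • x, hsxT⟩ : T) ∈ W :=
        Submodule.mem_map_of_mem (by
          rw [Submodule.mem_comap]; exact hUmem.mpr ⟨x, hx, rfl⟩)
      rw [hbot, Submodule.mem_bot, Submodule.mkQ_apply, Submodule.Quotient.mk_eq_zero,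
        Submodule.mem_smul_top_iff] at hmem
      exact hxm hmem
    · exact htop
  -- T ≤ U ⊔ m • T
  have hTle : T ≤ U ⊔ (maximalIdeal O) • T := by
    intro t ht
    have hmem : Submodule.mkQ _ (⟨t, ht⟩ : T) ∈ W := by rw [hWtop]; exact Submodule.mem_top
    rw [hWdef, Submodule.mem_map] at hmem
    obtain ⟨w, hw, hqw⟩ := hmem
    rw [Submodule.mkQ_apply, Submodule.mkQ_apply, Submodule.Quotient.eq] at hqw
    rw [Submodule.mem_smul_top_iff] at hqw
    have hwU : (w : V) ∈ U := hw
    have hsub : ((w : V) - t) ∈ (maximalIdeal O) • T := by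
      simpa using hqw
    rw [Submodule.mem_sup]
    exact ⟨(w : V), hwU, -((w : V) - t), neg_mem hsub, by abel⟩
  have hTU : T ≤ U :=
    Submodule.le_of_le_smul_of_le_jacobson_bot hTfg
      (by rw [IsLocalRing.jacobson_eq_maximalIdeal ⊥ bot_ne_top]) hTle
  have hUeq : T'.map (θO : V →ₗ[O] V) = T := le_antisymm hUT hTU
  -- the equivalence
  set Φ : T' ≃ₗ[O] T := (θO.submoduleMap T').trans (LinearEquiv.ofEq _ T hUeq) with hΦdef
  have hΦcoe : ∀ z : T', (Φ z : V) = s • (z : V) := fun z => rfl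
  have hmapcoe : ∀ (p : Submodule O T'),
      p.map (Φ : T' →ₗ[O] T) = p.map (Φ : T' →ₗ[O] T) := by
    intro p; ext x
    rw [Submodule.mem_map]
  have hΦmap : (maximalIdeal O • ⊤ : Submodule O T').map (Φ : T' →ₗ[O] T) =
      (maximalIdeal O • ⊤ : Submodule O T) := by
    rw [hmapcoe, Submodule.map_smul'', Submodule.map_top, LinearEquiv.range]
  set e' := Submodule.Quotient.equiv _ _ Φ hΦmap with he'def
  have he'mk : ∀ z : T',
      e' (Submodule.Quotient.mk z) = Submodule.Quotient.mk (Φ z) := fun z => rfl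
  have hcomm : ∀ (g : G) (z : T'), σ g (Φ z) = Φ (σ' g z) := by
    intro g z
    apply Subtype.ext
    rw [hσ g (Φ z), hΦcoe, hΦcoe, map_smul, hσ' g z]
  have key : ∀ (g : G) (y : T' ⧸ (maximalIdeal O • ⊤ : Submodule O T')),
      residualMap (maximalIdeal O) (σ g) (e' y) =
        e' (residualMap (maximalIdeal O) (σ' g) y) := by
    intro g y
    refine Submodule.Quotient.induction_on _ y (fun z => ?_)
    rw [he'mk, residualMap_mk, residualMap_mk, he'mk, hcomm]
  refine ⟨e'.symm, fun g x => ?_⟩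
  have := key g (e'.symm x)
  rw [LinearEquiv.apply_symm_apply] at this
  rw [this, LinearEquiv.symm_apply_apply]
end

section
/- Let O be a complete discrete valuation ring with maximal ideal m and fraction field L, V a finite-dimensional L-vector space with an action of a group G, and T, T' ⊆ V two G-stable O-lattices. If T/mT is irreducible as a module over the residue field group algebra, then there exists a ∈ L× with T = aT'. -/
open IsLocalRing Pointwise

/-- Clearing denominators: if `T'` is finitely generated and `T` spans `V` over `L`,
then some nonzero `c : O` scales `T'` into `T`. -/
lemma exists_nonzero_smul_le
    {O : Type*} [CommRing O] [IsDomain O]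
    {L : Type*} [Field L] [Algebra O L] [IsFractionRing O L]
    {V : Type*} [AddCommGroup V] [Module L V] [Module O V] [IsScalarTower O L V]
    (T T' : Submodule O V) (hT'fg : T'.FG)
    (hTspan : Submodule.span L (T : Set V) = ⊤) :
    ∃ c : O, c ≠ 0 ∧ ∀ x ∈ T', algebraMap O L c • x ∈ T := by
  have key : ∀ v : V, ∃ c : O, c ≠ 0 ∧ algebraMap O L c • v ∈ T := by
    intro v
    have hv : v ∈ Submodule.span L (T : Set V) := by rw [hTspan]; trivial
    obtain ⟨n, f, g, hfg⟩ := Submodule.mem_span_set'.mp hv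
    obtain ⟨b, hb⟩ := IsLocalization.exist_integer_multiples (nonZeroDivisors O)
      Finset.univ f
    refine ⟨b, nonZeroDivisors.coe_ne_zero b, ?_⟩
    rw [← hfg, Finset.smul_sum]
    refine Submodule.sum_mem _ fun i _ => ?_
    obtain ⟨o, ho⟩ := hb i (Finset.mem_univ i)
    have : (algebraMap O L (b : O)) • f i • (g i : V) = o • (g i : V) := by
      rw [← smul_assoc, smul_eq_mul, ← Algebra.smul_def, ← ho, algebraMap_smul]
    rw [this]
    exact T.smul_mem o (g i).2
  obtain ⟨s, hs⟩ := hT'fg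
  choose c hc0 hcT using key
  classical
  refine ⟨∏ v ∈ s, c v, Finset.prod_ne_zero_iff.mpr fun v _ => hc0 v, fun x hx => ?_⟩
  have hx' : x ∈ Submodule.span O (s : Set V) := by rw [hs]; exact hx
  let f : V →ₗ[O] V :=
    (LinearMap.lsmul L V (algebraMap O L (∏ v ∈ s, c v))).restrictScalars O
  suffices h : Submodule.span O (s : Set V) ≤ T.comap f from h hx'
  rw [Submodule.span_le]
  intro v hv
  simp only [SetLike.mem_coe, Submodule.mem_comap, LinearMap.restrictScalars_apply,
    LinearMap.lsmul_apply, f]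
  rw [← Finset.mul_prod_erase s c hv, mul_comm, map_mul, mul_smul, algebraMap_smul]
  exact T.smul_mem _ (hcT v)

/-- Let `O` be a complete discrete valuation ring with maximal ideal `m`
and fraction field `L`, `V` a finite-dimensional `L`-vector space with an action of a
group `G` (given by `ρ`), and `T, T' ⊆ V` two `G`-stable `O`-lattices (with `G`-actions
recorded by `σ, σ'`). If `T/mT` is irreducible as a module over the residue field group
algebra `k[G]`, then there exists `a ∈ L^×` with `T = a • T'`. -/
theorem statement1
    {O : Type*} [CommRing O] [IsDomain O] [IsDiscreteValuationRing O]
    [IsAdicComplete (maximalIdeal O) O]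
    {L : Type*} [Field L] [Algebra O L] [IsFractionRing O L]
    {V : Type*} [AddCommGroup V] [Module L V] [Module O V] [IsScalarTower O L V]
    [FiniteDimensional L V]
    {G : Type*} [Group G] (ρ : G →* (V →ₗ[L] V))
    (T T' : Submodule O V) (hTfg : T.FG) (hT'fg : T'.FG)
    (hTspan : Submodule.span L (T : Set V) = ⊤)
    (hT'span : Submodule.span L (T' : Set V) = ⊤)
    (σ : G → (T →ₗ[O] T)) (σ' : G → (T' →ₗ[O] T'))
    (hσ : ∀ g (x : T), ((σ g x : V)) = ρ g (x : V))
    (hσ' : ∀ g (x : T'), ((σ' g x : V)) = ρ g (x : V))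
    (hirr : ∀ W : Submodule O (T ⧸ (maximalIdeal O • ⊤ : Submodule O T)),
      (∀ g, W.map (residualMap (maximalIdeal O) (σ g)) ≤ W) → W = ⊥ ∨ W = ⊤) :
    ∃ a : L, a ≠ 0 ∧
      T = Submodule.map (((LinearMap.lsmul L V a)).restrictScalars O) T' := by
  rcases subsingleton_or_nontrivial V with hV | hV
  · exact ⟨1, one_ne_zero, Subsingleton.elim _ _⟩
  obtain ⟨c, hc0, hcT⟩ := exists_nonzero_smul_le T T' hT'fg hTspan
  obtain ⟨d, hd0, hdT⟩ := exists_nonzero_smul_le T' T hTfg hT'span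
  have hinj := IsFractionRing.injective O L
  have hT'bot : T' ≠ ⊥ := by
    intro h
    rw [h] at hT'span
    simp only [Submodule.bot_coe, Submodule.span_zero_singleton] at hT'span
    exact bot_ne_top (α := Submodule L V) hT'span
  have halgd : algebraMap O L d ≠ 0 := (map_ne_zero_iff _ hinj).mpr hd0
  have hint : ∀ a : L, (∀ x ∈ T', a • x ∈ T) →
      ∃ o : O, algebraMap O L o = algebraMap O L d * a := by
    intro a ha
    have hsmul : ∀ x ∈ T', (algebraMap O L d * a) • x ∈ T' := by
      intro x hx
      rw [mul_smul]
      exact hdT _ (ha x hx)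
    have hIa : IsIntegral O (algebraMap O L d * a) :=
      isIntegral_of_smul_mem_submodule T' hT'bot hT'fg _ hsmul
    exact IsIntegrallyClosed.isIntegral_iff.mp hIa
  have hAne : (d * c) ∈ {o : O | o ≠ 0 ∧
      ∀ x ∈ T', (algebraMap O L o * (algebraMap O L d)⁻¹) • x ∈ T} := by
    refine ⟨mul_ne_zero hd0 hc0, fun x hx => ?_⟩
    have heq : algebraMap O L (d * c) * (algebraMap O L d)⁻¹ = algebraMap O L c := by
      rw [map_mul]
      field_simp
    rw [heq]
    exact hcT x hx
  obtain ⟨o, hoA, homin⟩ := (wellFounded_dvdNotUnit (α := O)).has_min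
    {o : O | o ≠ 0 ∧ ∀ x ∈ T', (algebraMap O L o * (algebraMap O L d)⁻¹) • x ∈ T}
    ⟨d * c, hAne⟩
  obtain ⟨ho0, hoT⟩ := hoA
  set a : L := algebraMap O L o * (algebraMap O L d)⁻¹ with ha_def
  have ha0 : a ≠ 0 := mul_ne_zero ((map_ne_zero_iff _ hinj).mpr ho0) (inv_ne_zero halgd)
  obtain ⟨π, hπ⟩ := IsDiscreteValuationRing.exists_irreducible O
  have halgπ : algebraMap O L π ≠ 0 := (map_ne_zero_iff _ hinj).mpr hπ.ne_zero
  have hnot : ∃ y ∈ T', ∀ t ∈ T, (algebraMap O L π) • t ≠ a • y := by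
    by_contra hcon
    push_neg at hcon
    set a' : L := a * (algebraMap O L π)⁻¹ with ha'
    have ha'T : ∀ x ∈ T', a' • x ∈ T := by
      intro x hx
      obtain ⟨t, htT, ht⟩ := hcon x hx
      have : a' • x = t := by
        rw [ha', mul_comm, mul_smul, ← ht, ← mul_smul, inv_mul_cancel₀ halgπ, one_smul]
      rw [this]
      exact htT
    obtain ⟨o', ho'⟩ := hint a' ha'T
    have hoo' : o = π * o' := by
      apply hinj
      rw [map_mul, ho', ha', ha_def]
      field_simp
    have ho'0 : o' ≠ 0 := by
      rintro rfl
      rw [mul_zero] at hoo'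
      exact ho0 hoo'
    have ho'A : o' ∈ {o : O | o ≠ 0 ∧
        ∀ x ∈ T', (algebraMap O L o * (algebraMap O L d)⁻¹) • x ∈ T} := by
      refine ⟨ho'0, fun x hx => ?_⟩
      have heq : algebraMap O L o' * (algebraMap O L d)⁻¹ = a' := by
        rw [ha', ha_def, hoo', map_mul]
        field_simp
      rw [heq]
      exact ha'T x hx
    exact homin o' ho'A ⟨ho'0, π, hπ.not_isUnit, by rw [hoo']; ring⟩
  have haT : ∀ x ∈ T', a • x ∈ T := hoT
  let ℓ : V →ₗ[O] V := (LinearMap.lsmul L V a).restrictScalars O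
  let S : Submodule O T := Submodule.comap T.subtype (T'.map ℓ)
  let q := Submodule.mkQ ((maximalIdeal O) • ⊤ : Submodule O T)
  have hstab : ∀ g, (S.map q).map (residualMap (maximalIdeal O) (σ g)) ≤ S.map q := by
    intro g
    rintro w ⟨_, ⟨x, hxS, rfl⟩, rfl⟩
    obtain ⟨y, hyT', hyx⟩ := Submodule.mem_map.mp hxS
    refine Submodule.mem_map.mpr ⟨σ g x, ?_, ?_⟩
    · show ((σ g x : V)) ∈ T'.map ℓ
      refine Submodule.mem_map.mpr ⟨(σ' g ⟨y, hyT'⟩ : V), (σ' g ⟨y, hyT'⟩).2, ?_⟩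
      show a • ((σ' g ⟨y, hyT'⟩ : V)) = (σ g x : V)
      rw [hσ' g ⟨y, hyT'⟩, hσ g x, ← map_smul]
      exact congrArg (ρ g) hyx
    · show q (σ g x) = residualMap (maximalIdeal O) (σ g) (q x)
      simp only [q, residualMap, Submodule.mkQ_apply, Submodule.mapQ_apply]
  have hWtop : S.map q = ⊤ := by
    rcases hirr (S.map q) hstab with hbot | htop
    · exfalso
      obtain ⟨y, hyT', hy⟩ := hnot
      have hx0S : (⟨a • y, haT y hyT'⟩ : T) ∈ S :=
        Submodule.mem_map.mpr ⟨y, hyT', rfl⟩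
      have : q ⟨a • y, haT y hyT'⟩ ∈ S.map q := Submodule.mem_map.mpr ⟨_, hx0S, rfl⟩
      rw [hbot, Submodule.mem_bot] at this
      rw [Submodule.mkQ_apply, Submodule.Quotient.mk_eq_zero] at this
      rw [Submodule.mem_smul_top_iff, hπ.maximalIdeal_eq,
        Submodule.ideal_span_singleton_smul] at this
      have hset : a • y ∈ π • (T : Set V) := by
        rw [← Submodule.coe_pointwise_smul]
        exact this
      obtain ⟨t, htT, ht⟩ := Set.mem_smul_set.mp hset
      exact hy t htT (by rw [algebraMap_smul]; exact ht)
    · exact htop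
  have hsup : (maximalIdeal O • ⊤ : Submodule O T) ⊔ S = ⊤ :=
    (Submodule.map_mkQ_eq_top _ _).mp hWtop
  have hStop : S = ⊤ := by
    have hfg : (⊤ : Submodule O T).FG := (Submodule.fg_top T).mpr hTfg
    have hle : (⊤ : Submodule O T) ≤ S ⊔ (maximalIdeal O) • (⊤ : Submodule O T) := by
      rw [sup_comm] at hsup
      rw [hsup]
    have := Submodule.le_of_le_smul_of_le_jacobson_bot hfg
      (by rw [IsLocalRing.jacobson_eq_maximalIdeal ⊥ bot_ne_top]) hle
    exact top_le_iff.mp this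
  refine ⟨a, ha0, le_antisymm ?_ ?_⟩
  · intro x hx
    have : (⟨x, hx⟩ : T) ∈ S := hStop ▸ Submodule.mem_top
    exact this
  · rintro x ⟨y, hy, rfl⟩
    exact haT y hy
end
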